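/- Let f : ℝ^{n×p} → ℝ be continuously differentiable and let X ∈ ℝ^{n×p} satisfy XᵀX = I_p. Then there exists a symmetric matrix Λ ∈ ℝ^{p×p} such that ∇f(X) = XΛ if and only if ∇f(X) − X∇f(X)ᵀX = 0; moreover, in this case necessarily Λ = ∇f(X)ᵀX (in particular, ∇f(X)ᵀX is symmetric). -/
import Mathlib


open Matrix

attribute [local instance] Matrix.frobeniusNormedAddCommGroup Matrix.frobeniusNormedSpace

/-- For a continuously differentiable `f` with gradient `G` at a feasible
point `X` (`XᵀX = I_p`), there exists a symmetric `Λ` with `∇f(X) = XΛ` iff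
`∇f(X) − X∇f(X)ᵀX = 0`; moreover any such `Λ` necessarily equals `∇f(X)ᵀX`
(so in particular `∇f(X)ᵀX` is then symmetric). -/
theorem stmt0 {n p : ℕ} (f : Matrix (Fin n) (Fin p) ℝ → ℝ)
    (hf : ContDiff ℝ 1 f)
    (X G : Matrix (Fin n) (Fin p) ℝ)
    (hG : ∀ H, fderiv ℝ f X H = Matrix.trace (Gᵀ * H))
    (hX : Xᵀ * X = 1) :
    ((∃ Λ : Matrix (Fin p) (Fin p) ℝ, Λᵀ = Λ ∧ G = X * Λ) ↔ G - X * Gᵀ * X = 0)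
    ∧ (∀ Λ : Matrix (Fin p) (Fin p) ℝ, Λᵀ = Λ → G = X * Λ → Λ = Gᵀ * X)
    ∧ ((∃ Λ : Matrix (Fin p) (Fin p) ℝ, Λᵀ = Λ ∧ G = X * Λ) → (Gᵀ * X)ᵀ = Gᵀ * X) := by
  have key : ∀ Λ : Matrix (Fin p) (Fin p) ℝ, Λᵀ = Λ → G = X * Λ → Λ = Gᵀ * X := by
    intro Λ hΛ hGX
    calc Λ = Λᵀ * (Xᵀ * X) := by rw [hΛ, hX, Matrix.mul_one]
    _ = (X * Λ)ᵀ * X := by rw [Matrix.transpose_mul, Matrix.mul_assoc]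
    _ = Gᵀ * X := by rw [← hGX]
  constructor
  · constructor
    · rintro ⟨Λ, hΛ, hGX⟩
      have h2 : Gᵀ * X = Λ := (key Λ hΛ hGX).symm
      rw [Matrix.mul_assoc, h2, ← hGX, sub_self]
    · intro h
      rw [sub_eq_zero] at h
      refine ⟨Gᵀ * X, ?_, by rw [← Matrix.mul_assoc]; exact h⟩
      calc (Gᵀ * X)ᵀ = Xᵀ * G := by rw [Matrix.transpose_mul, Matrix.transpose_transpose]
      _ = Xᵀ * (X * Gᵀ * X) := by rw [← h]
      _ = Gᵀ * X := by rw [Matrix.mul_assoc, ← Matrix.mul_assoc Xᵀ, hX, Matrix.one_mul]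
  · refine ⟨key, ?_⟩
    rintro ⟨Λ, hΛ, hGX⟩
    rw [← key Λ hΛ hGX, hΛ]
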